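/- Let A, Â ∈ ℝ^{d×r} with columns a₁,…,a_r and â₁,…,â_r. Assume ‖AᵀA − I_r‖₂ ≤ δ, that ‖â_j − a_j‖₂ ≤ ε for every j, and that √(1−δ) − √r·ε > 0. Then ÂᵀÂ is invertible, and with B̂ = Â(ÂᵀÂ)^{-1} whose columns are b̂₁,…,b̂_r and ĝ_j = b̂_j/‖b̂_j‖₂, one has for every j: ⟨a_j, ĝ_j⟩ ≥ √(1−δ) − (√r + 1)·ε. -/

import Mathlib

open Matrix

/-- Spectral norm (largest singular value): operator norm of the induced map
between Euclidean spaces. -/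
noncomputable def specNorm {m n : Type*} [Fintype m] [Fintype n] [DecidableEq n]
    (M : Matrix m n ℝ) : ℝ :=
  ‖LinearMap.toContinuousLinearMap (Matrix.toEuclideanLin M)‖

/-- Euclidean norm of a vector. -/
noncomputable def euclNorm {n : Type*} [Fintype n] (x : n → ℝ) : ℝ :=
  Real.sqrt (∑ i, x i ^ 2)
/-- `Bhat Ahat = Ahat (AhatᵀAhat)⁻¹`. -/
noncomputable def Bhat {d r : ℕ} (Ahat : Matrix (Fin d) (Fin r) ℝ) :
    Matrix (Fin d) (Fin r) ℝ :=
  Ahat * (Ahatᵀ * Ahat)⁻¹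

/-- The normalized `j`-th column of `Bhat Ahat`. -/
noncomputable def ghat {d r : ℕ} (Ahat : Matrix (Fin d) (Fin r) ℝ) (j : Fin r) :
    Fin d → ℝ :=
  fun k => Bhat Ahat k j / euclNorm (fun k' => Bhat Ahat k' j)

lemma euclNorm_eq_norm {n : Type*} [Fintype n] (x : n → ℝ) :
    euclNorm x = ‖(WithLp.equiv 2 (n → ℝ)).symm x‖ := by
  rw [EuclideanSpace.norm_eq]
  simp [euclNorm, WithLp.equiv_symm_apply, PiLp.toLp_apply, sq_abs]

lemma euclNorm_nonneg {n : Type*} [Fintype n] (x : n → ℝ) : 0 ≤ euclNorm x :=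
  Real.sqrt_nonneg _

lemma euclNorm_sq {n : Type*} [Fintype n] (x : n → ℝ) : euclNorm x ^ 2 = ∑ i, x i ^ 2 :=
  Real.sq_sqrt (Finset.sum_nonneg fun i _ => sq_nonneg _)

lemma euclNorm_eq_zero {n : Type*} [Fintype n] {x : n → ℝ} (h : euclNorm x = 0) : x = 0 := by
  rw [euclNorm_eq_norm] at h
  have := norm_eq_zero.mp h
  have := congrArg (WithLp.equiv 2 (n → ℝ)) this
  simpa using this

lemma euclNorm_pos {n : Type*} [Fintype n] {x : n → ℝ} (h : x ≠ 0) : 0 < euclNorm x := by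
  rcases lt_or_eq_of_le (euclNorm_nonneg x) with h' | h'
  · exact h'
  · exact absurd (euclNorm_eq_zero h'.symm) h

lemma abs_dot_le {n : Type*} [Fintype n] (x y : n → ℝ) :
    |x ⬝ᵥ y| ≤ euclNorm x * euclNorm y := by
  have h := Finset.sum_mul_sq_le_sq_mul_sq Finset.univ x y
  rw [dotProduct, ← Real.sqrt_sq_eq_abs]
  calc Real.sqrt ((∑ i, x i * y i) ^ 2) ≤ Real.sqrt ((∑ i, x i ^ 2) * ∑ i, y i ^ 2) :=
        Real.sqrt_le_sqrt h
    _ = euclNorm x * euclNorm y := by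
        rw [Real.sqrt_mul (Finset.sum_nonneg fun i _ => sq_nonneg _)]; rfl

lemma abs_apply_le_euclNorm {n : Type*} [Fintype n] (x : n → ℝ) (i : n) :
    |x i| ≤ euclNorm x := by
  rw [← Real.sqrt_sq_eq_abs]
  exact Real.sqrt_le_sqrt (Finset.single_le_sum (f := fun i => x i ^ 2)
    (fun i _ => sq_nonneg _) (Finset.mem_univ i))

lemma euclNorm_le_add_sub {n : Type*} [Fintype n] (x y : n → ℝ) :
    euclNorm x ≤ euclNorm y + euclNorm (fun i => x i - y i) := by
  rw [euclNorm_eq_norm, euclNorm_eq_norm, euclNorm_eq_norm]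
  have hx : (WithLp.equiv 2 (n → ℝ)).symm x
      = (WithLp.equiv 2 (n → ℝ)).symm y + (WithLp.equiv 2 (n → ℝ)).symm (fun i => x i - y i) := by
    ext i
    simp [WithLp.equiv_symm_apply, PiLp.toLp_apply]
  rw [hx]
  exact norm_add_le _ _

lemma dot_mulVec_le_spec {n : Type*} [Fintype n] [DecidableEq n] (M : Matrix n n ℝ) (v : n → ℝ) :
    |v ⬝ᵥ (M *ᵥ v)| ≤ specNorm M * euclNorm v ^ 2 := by
  have h1 : v ⬝ᵥ (M *ᵥ v) = inner ℝ ((WithLp.equiv 2 (n → ℝ)).symm v : EuclideanSpace ℝ n)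
      ((LinearMap.toContinuousLinearMap (Matrix.toEuclideanLin M))
        ((WithLp.equiv 2 (n → ℝ)).symm v)) := by
    simp [LinearMap.coe_toContinuousLinearMap', Matrix.toEuclideanLin_apply,
      PiLp.inner_apply, RCLike.inner_apply, dotProduct,
      WithLp.equiv_symm_apply, PiLp.toLp_apply, mul_comm]
  rw [h1]
  set f := LinearMap.toContinuousLinearMap (Matrix.toEuclideanLin M) with hf
  set vE : EuclideanSpace ℝ n := (WithLp.equiv 2 (n → ℝ)).symm v with hvE
  calc |(inner ℝ vE (f vE) : ℝ)| ≤ ‖vE‖ * ‖f vE‖ := abs_real_inner_le_norm _ _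
    _ ≤ ‖vE‖ * (‖f‖ * ‖vE‖) :=
        mul_le_mul_of_nonneg_left (f.le_opNorm vE) (norm_nonneg _)
    _ = specNorm M * euclNorm v ^ 2 := by
        rw [euclNorm_eq_norm]; rw [specNorm, ← hf, ← hvE]; ring

lemma euclNorm_neg_sub {n : Type*} [Fintype n] (x y : n → ℝ) :
    euclNorm (fun i => x i - y i) = euclNorm (fun i => y i - x i) := by
  unfold euclNorm
  congr 1
  exact Finset.sum_congr rfl fun i _ => by ring

lemma sum_abs_le_sqrt_card {r : ℕ} (v : Fin r → ℝ) :
    ∑ j, |v j| ≤ Real.sqrt r * euclNorm v := by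
  have h := Finset.sum_mul_sq_le_sq_mul_sq Finset.univ (fun j => |v j|) (fun _ => (1 : ℝ))
  simp only [mul_one, sq_abs, one_pow, Finset.sum_const, Finset.card_univ,
    Fintype.card_fin, nsmul_eq_mul] at h
  have h0 : (∑ j, |v j|) = Real.sqrt ((∑ j, |v j|) ^ 2) :=
    (Real.sqrt_sq (Finset.sum_nonneg fun j _ => abs_nonneg _)).symm
  rw [h0]
  calc Real.sqrt ((∑ j, |v j|) ^ 2) ≤ Real.sqrt ((∑ j, v j ^ 2) * r) := Real.sqrt_le_sqrt h
    _ = Real.sqrt r * euclNorm v := by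
        rw [Real.sqrt_mul (Finset.sum_nonneg fun j _ => sq_nonneg _)]
        rw [euclNorm, mul_comm]

lemma eucl_sum_apply {d : ℕ} {ι : Type*} (s : Finset ι) (f : ι → EuclideanSpace ℝ (Fin d))
    (i : Fin d) : (∑ j ∈ s, f j) i = ∑ j ∈ s, f j i := by
  induction s using Finset.cons_induction with
  | empty => rfl
  | cons a s ha ih => rw [Finset.sum_cons, Finset.sum_cons, ← ih]; rfl

lemma euclNorm_mulVec_cols {d r : ℕ} (D : Matrix (Fin d) (Fin r) ℝ) {ε : ℝ}
    (hcol : ∀ j, euclNorm (fun i => D i j) ≤ ε) (hε0 : 0 ≤ ε) (v : Fin r → ℝ) :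
    euclNorm (D *ᵥ v) ≤ Real.sqrt r * ε * euclNorm v := by
  have key : (WithLp.equiv 2 (Fin d → ℝ)).symm (D *ᵥ v)
      = ∑ j, v j • ((WithLp.equiv 2 (Fin d → ℝ)).symm (fun i => D i j)) := by
    ext i
    rw [eucl_sum_apply]
    simp [WithLp.equiv_symm_apply, PiLp.toLp_apply, PiLp.smul_apply, smul_eq_mul, Matrix.mulVec,
      dotProduct, mul_comm]
  rw [euclNorm_eq_norm, key]
  calc ‖∑ j, v j • ((WithLp.equiv 2 (Fin d → ℝ)).symm (fun i => D i j))‖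
      ≤ ∑ j, ‖v j • ((WithLp.equiv 2 (Fin d → ℝ)).symm (fun i => D i j))‖ :=
        norm_sum_le _ _
    _ = ∑ j, |v j| * euclNorm (fun i => D i j) := by
        apply Finset.sum_congr rfl
        intro j _
        rw [norm_smul, Real.norm_eq_abs, euclNorm_eq_norm]
    _ ≤ ∑ j, |v j| * ε :=
        Finset.sum_le_sum fun j _ => mul_le_mul_of_nonneg_left (hcol j) (abs_nonneg _)
    _ = (∑ j, |v j|) * ε := by rw [Finset.sum_mul]
    _ ≤ (Real.sqrt r * euclNorm v) * ε :=
        mul_le_mul_of_nonneg_right (sum_abs_le_sqrt_card v) hε0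
    _ = Real.sqrt r * ε * euclNorm v := by ring

lemma euclNorm_mulVec_sq {d r : ℕ} (A : Matrix (Fin d) (Fin r) ℝ) (v : Fin r → ℝ) :
    euclNorm (A *ᵥ v) ^ 2 = v ⬝ᵥ ((Aᵀ * A) *ᵥ v) := by
  rw [euclNorm_sq, ← Matrix.mulVec_mulVec, Matrix.dotProduct_mulVec,
    Matrix.vecMul_transpose]
  simp [dotProduct, sq]

theorem stmt_7 {d r : ℕ} {δ ε : ℝ}
    (A Ahat : Matrix (Fin d) (Fin r) ℝ)
    (hδ : specNorm (Aᵀ * A - 1) ≤ δ)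
    (hε : ∀ j, euclNorm (fun i => Ahat i j - A i j) ≤ ε)
    (hpos : 0 < Real.sqrt (1 - δ) - Real.sqrt (r : ℝ) * ε) :
    IsUnit (Ahatᵀ * Ahat) ∧
      ∀ j, Real.sqrt (1 - δ) - (Real.sqrt (r : ℝ) + 1) * ε
        ≤ (fun i => A i j) ⬝ᵥ ghat Ahat j := by
  rcases Nat.eq_zero_or_pos r with hr | hr
  · subst hr
    refine ⟨(Matrix.isUnit_iff_isUnit_det _).mpr ?_, fun j => j.elim0⟩
    rw [Matrix.det_fin_zero]
    exact isUnit_one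
  have hε0 : 0 ≤ ε := le_trans (euclNorm_nonneg _) (hε ⟨0, hr⟩)
  set c := Real.sqrt (1 - δ) - Real.sqrt (r : ℝ) * ε with hc
  -- lower bound for A
  have hAv : ∀ v : Fin r → ℝ, Real.sqrt (1 - δ) * euclNorm v ≤ euclNorm (A *ᵥ v) := by
    intro v
    have e1 := euclNorm_mulVec_sq A v
    have e2 : v ⬝ᵥ ((Aᵀ * A) *ᵥ v) = v ⬝ᵥ ((Aᵀ * A - 1) *ᵥ v) + euclNorm v ^ 2 := by
      rw [Matrix.sub_mulVec, dotProduct_sub, euclNorm_sq]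
      simp [Matrix.one_mulVec, dotProduct, sq]
    have e3 := dot_mulVec_le_spec (Aᵀ * A - 1) v
    have e4 : -(δ * euclNorm v ^ 2) ≤ v ⬝ᵥ ((Aᵀ * A - 1) *ᵥ v) := by
      have h5 := neg_abs_le (v ⬝ᵥ ((Aᵀ * A - 1) *ᵥ v))
      nlinarith [sq_nonneg (euclNorm v)]
    have h2 : (1 - δ) * euclNorm v ^ 2 ≤ euclNorm (A *ᵥ v) ^ 2 := by nlinarith
    rcases le_or_gt 0 (1 - δ) with h1δ | h1δ
    · have e5 : Real.sqrt (1 - δ) * euclNorm v = Real.sqrt ((1 - δ) * euclNorm v ^ 2) := by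
        rw [Real.sqrt_mul h1δ, Real.sqrt_sq (euclNorm_nonneg v)]
      rw [e5, ← Real.sqrt_sq (euclNorm_nonneg (A *ᵥ v))]
      exact Real.sqrt_le_sqrt h2
    · have e5 : Real.sqrt (1 - δ) = 0 := Real.sqrt_eq_zero_of_nonpos h1δ.le
      rw [e5, zero_mul]
      exact euclNorm_nonneg _
  -- lower bound for Ahat
  have hcv : ∀ v : Fin r → ℝ, c * euclNorm v ≤ euclNorm (Ahat *ᵥ v) := by
    intro v
    have t1 := euclNorm_le_add_sub (A *ᵥ v) (Ahat *ᵥ v)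
    have t2 : euclNorm (fun i => (A *ᵥ v) i - (Ahat *ᵥ v) i)
        ≤ Real.sqrt (r : ℝ) * ε * euclNorm v := by
      have e6 : (fun i => (A *ᵥ v) i - (Ahat *ᵥ v) i) = (A - Ahat) *ᵥ v := by
        funext i; rw [Matrix.sub_mulVec]; rfl
      rw [e6]
      refine euclNorm_mulVec_cols _ (fun j => ?_) hε0 v
      have e7 : (fun i => (A - Ahat) i j) = fun i => A i j - Ahat i j := by
        funext i; rfl
      rw [e7, euclNorm_neg_sub]
      exact hε j
    have t3 := hAv v
    rw [hc]
    nlinarith [euclNorm_nonneg v]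
  have hc_pos : 0 < c := hpos
  -- kernel trivial
  have hker : ∀ v : Fin r → ℝ, (Ahatᵀ * Ahat) *ᵥ v = 0 → v = 0 := by
    intro v hv
    have h0 : euclNorm (Ahat *ᵥ v) ^ 2 = 0 := by
      rw [euclNorm_mulVec_sq, hv, dotProduct_zero]
    have h0' : euclNorm (Ahat *ᵥ v) = 0 := by
      have := euclNorm_nonneg (Ahat *ᵥ v); nlinarith
    have h1 := hcv v
    rw [h0'] at h1
    have h2 : euclNorm v = 0 := le_antisymm (by nlinarith [euclNorm_nonneg v]) (euclNorm_nonneg v)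
    exact euclNorm_eq_zero h2
  have hdet : (Ahatᵀ * Ahat).det ≠ 0 := by
    intro h
    obtain ⟨v, hv0, hv⟩ := Matrix.exists_mulVec_eq_zero_iff.mpr h
    exact hv0 (hker v hv)
  have hU : IsUnit (Ahatᵀ * Ahat) := (Matrix.isUnit_iff_isUnit_det _).mpr (isUnit_iff_ne_zero.mpr hdet)
  refine ⟨hU, fun j => ?_⟩
  set w : Fin r → ℝ := fun l => (Ahatᵀ * Ahat)⁻¹ l j with hw
  set b : Fin d → ℝ := fun k => Bhat Ahat k j with hbdef
  have hb : b = Ahat *ᵥ w := by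
    funext k
    simp [hbdef, Bhat, Matrix.mul_apply, Matrix.mulVec, dotProduct, hw]
  have hMw : (Ahatᵀ * Ahat) *ᵥ w = fun i => (1 : Matrix (Fin r) (Fin r) ℝ) i j := by
    funext i
    have e8 : ((Ahatᵀ * Ahat) * (Ahatᵀ * Ahat)⁻¹) i j = (1 : Matrix (Fin r) (Fin r) ℝ) i j := by
      rw [Matrix.mul_nonsing_inv _ (isUnit_iff_ne_zero.mpr hdet)]
    rw [← e8]
    simp [Matrix.mulVec, dotProduct, Matrix.mul_apply, hw]
  have hAtb : Ahatᵀ *ᵥ b = fun i => (1 : Matrix (Fin r) (Fin r) ℝ) i j := by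
    rw [hb, Matrix.mulVec_mulVec]; exact hMw
  have key1 : (fun i => Ahat i j) ⬝ᵥ b = 1 := by
    have e9 : (Ahatᵀ *ᵥ b) j = 1 := by rw [hAtb]; simp [Matrix.one_apply]
    simpa [Matrix.mulVec, dotProduct, Matrix.transpose_apply] using e9
  have hbne : b ≠ 0 := by
    intro h0
    have e10 := hAtb
    rw [h0, Matrix.mulVec_zero] at e10
    have e11 := congrFun e10 j
    simp [Matrix.one_apply] at e11
  have hnb : 0 < euclNorm b := euclNorm_pos hbne
  have hb2 : euclNorm b ^ 2 = w j := by
    calc euclNorm b ^ 2 = b ⬝ᵥ b := by rw [euclNorm_sq]; simp [dotProduct, sq]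
      _ = (b ᵥ* Ahat) ⬝ᵥ w := by nth_rw 2 [hb]; rw [Matrix.dotProduct_mulVec]
      _ = (Ahatᵀ *ᵥ b) ⬝ᵥ w := by rw [Matrix.mulVec_transpose]
      _ = w j := by rw [hAtb]; simp [dotProduct, Matrix.one_apply]
  have hwj : w j ≤ euclNorm w := le_trans (le_abs_self _) (abs_apply_le_euclNorm w j)
  have hcw : c * euclNorm w ≤ euclNorm b := by rw [hb]; exact hcv w
  have hcb : c * euclNorm b ≤ 1 := by nlinarith [euclNorm_nonneg w]
  have key2 : 1 - ε * euclNorm b ≤ (fun i => A i j) ⬝ᵥ b := by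
    have hd : (fun i => A i j) ⬝ᵥ b = 1 - (fun i => Ahat i j - A i j) ⬝ᵥ b := by
      rw [← key1]
      simp only [dotProduct]
      rw [← Finset.sum_sub_distrib]
      exact Finset.sum_congr rfl fun i _ => by ring
    rw [hd]
    have h5 : (fun i => Ahat i j - A i j) ⬝ᵥ b ≤ ε * euclNorm b :=
      calc (fun i => Ahat i j - A i j) ⬝ᵥ b ≤ |(fun i => Ahat i j - A i j) ⬝ᵥ b| := le_abs_self _
        _ ≤ euclNorm (fun i => Ahat i j - A i j) * euclNorm b := abs_dot_le _ _
        _ ≤ ε * euclNorm b := mul_le_mul_of_nonneg_right (hε j) (euclNorm_nonneg b)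
    linarith
  have hgoal : (fun i => A i j) ⬝ᵥ ghat Ahat j = ((fun i => A i j) ⬝ᵥ b) / euclNorm b := by
    simp only [ghat, dotProduct]
    rw [Finset.sum_div]
    exact Finset.sum_congr rfl fun i _ => by rw [mul_div_assoc]
  rw [hgoal]
  have h6 : c - ε ≤ ((fun i => A i j) ⬝ᵥ b) / euclNorm b := by
    rw [le_div_iff₀ hnb]
    nlinarith
  calc Real.sqrt (1 - δ) - (Real.sqrt (r : ℝ) + 1) * ε = c - ε := by rw [hc]; ring
    _ ≤ _ := h6
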